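/- For the distribution D_{k,ε} and any i ≠ j, the covariance of coordinates x_i, x_j (viewed as 0/1-valued) equals -ε/(2(1-α)), where α = (k-1)ε. -/

import Mathlib

open Finset

/-- Inner product over `F_2^m`. -/
def dot2 {m : ℕ} (a w : Fin m → ZMod 2) : ZMod 2 := ∑ i, a i * w i

/-- Coordinates of the Hadamard predicate: nonzero vectors of `F_2^m`. -/
abbrev Coord (m : ℕ) := {w : Fin m → ZMod 2 // w ≠ 0}

/-- The Hadamard codeword associated to `a ∈ F_2^m`. -/
def hadCW {m : ℕ} (a : Fin m → ZMod 2) : Coord m → ZMod 2 := fun w => dot2 a w.val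

/-- The weight-one string `e_{w0}`. -/
def ebas {m : ℕ} (w0 : Coord m) : Coord m → ZMod 2 := fun w => if w = w0 then 1 else 0

/-- The real 0/1 value of a bit. -/
noncomputable def bval (b : ZMod 2) : ℝ := if b = 1 then 1 else 0

/-- Under `D_{k,ε}`, the covariance of two distinct coordinates (as 0/1-valued
random variables) equals `-ε/(2(1-α))`. -/

def eA {m : ℕ} (i : Fin m) : Fin m → ZMod 2 := fun j => if j = i then 1 else 0
lemma dot2_eA {m : ℕ} (i : Fin m) (w : Fin m → ZMod 2) : dot2 (eA i) w = w i := by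
  simp [dot2, eA, ite_mul]
lemma dot2_add_left {m : ℕ} (a b w : Fin m → ZMod 2) :
    dot2 (a + b) w = dot2 a w + dot2 b w := by
  simp [dot2, add_mul, Finset.sum_add_distrib]
lemma dot2_zero_left {m : ℕ} (w : Fin m → ZMod 2) : dot2 0 w = 0 := by simp [dot2]
lemma eA_ne_zero {m : ℕ} (i : Fin m) : eA i ≠ (0 : Fin m → ZMod 2) := by
  intro h; have := congrFun h i; simp [eA] at this
lemma card_filter_translate {m : ℕ} (p q : (Fin m → ZMod 2) → Prop)
    [DecidablePred p] [DecidablePred q] (t : Fin m → ZMod 2)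
    (h : ∀ a, p a ↔ q (a + t)) :
    (univ.filter q).card = (univ.filter p).card := by
  have htt : ∀ a : Fin m → ZMod 2, a + t + t = a := by
    intro a; funext j
    have : ∀ x y : ZMod 2, x + y + y = x := by decide
    simp [this]
  have himg : univ.filter q = (univ.filter p).image (· + t) := by
    ext b
    simp only [Finset.mem_filter, Finset.mem_image, Finset.mem_univ, true_and]
    constructor
    · intro hb
      exact ⟨b + t, by rw [h (b + t), htt]; exact hb, htt b⟩
    · rintro ⟨a, ha, rfl⟩
      exact (h a).mp ha
  rw [himg, Finset.card_image_of_injective _ (add_left_injective t)]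

lemma card_domain (m : ℕ) : Fintype.card (Fin m → ZMod 2) = 2 ^ m := by
  simp [Fintype.card_fun]

lemma zmod2_ne_zero {x : ZMod 2} (h : x ≠ 0) : x = 1 := by revert h; revert x; decide

lemma exists_one (m : ℕ) {w : Fin m → ZMod 2} (hw : w ≠ 0) : ∃ i, w i = 1 := by
  obtain ⟨i, hi⟩ := Function.ne_iff.mp hw
  exact ⟨i, zmod2_ne_zero hi⟩

lemma two_mul_card_single {m : ℕ} (w : Fin m → ZMod 2) (hw : w ≠ 0) :
    2 * (univ.filter (fun a => dot2 a w = 1)).card = 2 ^ m := by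
  obtain ⟨i, hi⟩ := exists_one m hw
  have htrans : (univ.filter (fun a => dot2 a w = 1)).card
      = (univ.filter (fun a => dot2 a w = 0)).card := by
    apply card_filter_translate _ _ (eA i)
    intro a
    rw [dot2_add_left, dot2_eA, hi]
    have : ∀ x : ZMod 2, x = 0 ↔ x + 1 = 1 := by decide
    exact this _
  have hpart : (univ.filter (fun a => dot2 a w = 0)).card
      + (univ.filter (fun a => ¬ dot2 a w = 0)).card = 2 ^ m := by
    rw [Finset.card_filter_add_card_filter_not]
    simp [card_domain]
  have hcongr : (univ.filter (fun a => ¬ dot2 a w = 0)) = (univ.filter (fun a => dot2 a w = 1)) := by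
    apply Finset.filter_congr
    intro a _
    have : ∀ x : ZMod 2, ¬ x = 0 ↔ x = 1 := by decide
    simp [this]
  rw [hcongr] at hpart
  omega

lemma exists_pair_dot {m : ℕ} (w1 w2 : Fin m → ZMod 2) (h1 : w1 ≠ 0) (h2 : w2 ≠ 0)
    (h12 : w1 ≠ w2) : ∀ b1 b2 : ZMod 2, ∃ t, dot2 t w1 = b1 ∧ dot2 t w2 = b2 := by
  have key : ∃ t10 t01 : Fin m → ZMod 2,
      (dot2 t10 w1 = 1 ∧ dot2 t10 w2 = 0) ∧ (dot2 t01 w1 = 0 ∧ dot2 t01 w2 = 1) := by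
    obtain ⟨i, hi⟩ := Function.ne_iff.mp h12
    have hcase : (w1 i = 1 ∧ w2 i = 0) ∨ (w1 i = 0 ∧ w2 i = 1) := by
      revert hi; generalize w1 i = x; generalize w2 i = y; revert x y; decide
    rcases hcase with ⟨ha, hb⟩ | ⟨ha, hb⟩
    · obtain ⟨l, hl⟩ := exists_one m h2
      by_cases hwl : w1 l = 0
      · exact ⟨eA i, eA l, by simp [dot2_eA, ha, hb], by simp [dot2_eA, hwl, hl]⟩
      · refine ⟨eA i, eA i + eA l, by simp [dot2_eA, ha, hb], ?_, ?_⟩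
        · rw [dot2_add_left, dot2_eA, dot2_eA, ha, zmod2_ne_zero hwl]; decide
        · rw [dot2_add_left, dot2_eA, dot2_eA, hb, hl]; decide
    · obtain ⟨l, hl⟩ := exists_one m h1
      by_cases hwl : w2 l = 0
      · exact ⟨eA l, eA i, by simp [dot2_eA, hwl, hl], by simp [dot2_eA, ha, hb]⟩
      · refine ⟨eA i + eA l, eA i, ⟨?_, ?_⟩, by simp [dot2_eA, ha, hb]⟩
        · rw [dot2_add_left, dot2_eA, dot2_eA, ha, hl]; decide
        · rw [dot2_add_left, dot2_eA, dot2_eA, hb, zmod2_ne_zero hwl]; decide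
  obtain ⟨t10, t01, ⟨h10a, h10b⟩, ⟨h01a, h01b⟩⟩ := key
  have hb : ∀ b : ZMod 2, b = 0 ∨ b = 1 := by decide
  intro b1 b2
  rcases hb b1 with rfl | rfl <;> rcases hb b2 with rfl | rfl
  · exact ⟨0, dot2_zero_left _, dot2_zero_left _⟩
  · exact ⟨t01, h01a, h01b⟩
  · exact ⟨t10, h10a, h10b⟩
  · refine ⟨t10 + t01, ?_, ?_⟩ <;> rw [dot2_add_left] <;> simp [h10a, h10b, h01a, h01b]

lemma sum_zmod2 {M : Type*} [AddCommMonoid M] (g : ZMod 2 → M) :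
    ∑ x : ZMod 2, g x = g 0 + g 1 := by
  rw [show (univ : Finset (ZMod 2)) = {0, 1} from by decide]
  rw [Finset.sum_insert (by decide), Finset.sum_singleton]

lemma four_mul_card_pair {m : ℕ} (w1 w2 : Fin m → ZMod 2) (h1 : w1 ≠ 0) (h2 : w2 ≠ 0)
    (h12 : w1 ≠ w2) :
    4 * (univ.filter (fun a => dot2 a w1 = 1 ∧ dot2 a w2 = 1)).card = 2 ^ m := by
  have hfib : ∀ b1 b2 : ZMod 2,
      (univ.filter (fun a => dot2 a w1 = b1 ∧ dot2 a w2 = b2)).card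
        = (univ.filter (fun a => dot2 a w1 = 1 ∧ dot2 a w2 = 1)).card := by
    intro b1 b2
    obtain ⟨t, ht1, ht2⟩ := exists_pair_dot w1 w2 h1 h2 h12 (b1 + 1) (b2 + 1)
    apply card_filter_translate _ _ t
    intro a
    rw [dot2_add_left, dot2_add_left, ht1, ht2]
    have : ∀ x b : ZMod 2, (x = 1 ↔ x + (b + 1) = b) := by decide
    rw [← this, ← this]
  have hpart : (2 : ℕ) ^ m = ∑ b : ZMod 2 × ZMod 2,
      (univ.filter (fun a => (dot2 a w1, dot2 a w2) = b)).card := by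
    rw [← card_domain m, ← Finset.card_univ]
    exact Finset.card_eq_sum_card_fiberwise (fun a _ => Finset.mem_univ _)
  rw [Fintype.sum_prod_type] at hpart
  rw [sum_zmod2 (fun b1 => ∑ b2 : ZMod 2, _)] at hpart
  rw [sum_zmod2, sum_zmod2] at hpart
  simp only [Prod.mk.injEq] at hpart
  rw [hfib 0 0, hfib 0 1, hfib 1 0, hfib 1 1] at hpart
  omega


lemma dot2_eA_right {m : ℕ} (a : Fin m → ZMod 2) (i : Fin m) : dot2 a (eA i) = a i := by
  simp [dot2, eA, mul_ite]

lemma hadCW_inj {m : ℕ} : Function.Injective (hadCW (m := m)) := by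
  intro a b h
  by_contra hne
  obtain ⟨i, hi⟩ := Function.ne_iff.mp hne
  have := congrFun h ⟨eA i, eA_ne_zero i⟩
  simp only [hadCW, dot2_eA_right] at this
  exact hi this

lemma ebas_inj {m : ℕ} : Function.Injective (ebas (m := m)) := by
  intro a b h
  have := congrFun h a
  simp only [ebas, if_pos rfl] at this
  by_contra hne
  rw [if_neg hne] at this
  exact one_ne_zero this

lemma bval_mul {x y : ZMod 2} : bval x * bval y = if x = 1 ∧ y = 1 then 1 else 0 := by
  by_cases h1 : x = 1 <;> by_cases h2 : y = 1 <;> simp [bval, h1, h2]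

lemma sum_D_decomp {m : ℕ} (k : ℕ) (ε α : ℝ) (D : (Coord m → ZMod 2) → ℝ)
    (hD : ∀ x : Coord m → ZMod 2,
      D x = (if x = (fun _ => 0) then 1 / (1 - α) * (1 / ((k : ℝ) + 1) - α) else 0) +
        (if ∃ a : Fin m → ZMod 2, a ≠ 0 ∧ x = hadCW a then
          1 / (1 - α) * (1 / ((k : ℝ) + 1) - ε) else 0) +
        (if ∃ w0 : Coord m, x = ebas w0 then ε / (1 - α) else 0))
    (f : (Coord m → ZMod 2) → ℝ) :
    ∑ x : Coord m → ZMod 2, D x * f x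
      = (1 / (1 - α) * (1 / ((k : ℝ) + 1) - α)) * f (fun _ => 0)
        + (1 / (1 - α) * (1 / ((k : ℝ) + 1) - ε))
            * ∑ a ∈ univ.filter (fun a : Fin m → ZMod 2 => a ≠ 0), f (hadCW a)
        + (ε / (1 - α)) * ∑ w0 : Coord m, f (ebas w0) := by
  set c0 := 1 / (1 - α) * (1 / ((k : ℝ) + 1) - α)
  set c1 := 1 / (1 - α) * (1 / ((k : ℝ) + 1) - ε)
  set c2 := ε / (1 - α)
  have hterm : ∀ x : Coord m → ZMod 2, D x * f x
      = (if x = (fun _ => 0) then c0 * f x else 0)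
        + (if ∃ a : Fin m → ZMod 2, a ≠ 0 ∧ x = hadCW a then c1 * f x else 0)
        + (if ∃ w0 : Coord m, x = ebas w0 then c2 * f x else 0) := by
    intro x
    rw [hD x]
    split_ifs <;> ring
  rw [Finset.sum_congr rfl (fun x _ => hterm x), Finset.sum_add_distrib,
    Finset.sum_add_distrib]
  congr 1
  · congr 1
    · rw [Finset.sum_ite_eq' univ (fun _ => 0 : Coord m → ZMod 2) (fun x => c0 * f x)]
      simp
    · rw [← Finset.sum_filter]
      have himg : univ.filter (fun x : Coord m → ZMod 2 => ∃ a, a ≠ 0 ∧ x = hadCW a)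
          = (univ.filter (fun a : Fin m → ZMod 2 => a ≠ 0)).image hadCW := by
        ext x
        simp only [Finset.mem_filter, Finset.mem_image, Finset.mem_univ, true_and]
        constructor
        · rintro ⟨a, ha, rfl⟩; exact ⟨a, ha, rfl⟩
        · rintro ⟨a, ha, rfl⟩; exact ⟨a, ha, rfl⟩
      rw [himg, Finset.sum_image (fun a _ b _ h => hadCW_inj h), Finset.mul_sum]
  · rw [← Finset.sum_filter]
    have himg : univ.filter (fun x : Coord m → ZMod 2 => ∃ w0, x = ebas w0)
        = univ.image ebas := by
      ext x
      simp only [Finset.mem_filter, Finset.mem_image, Finset.mem_univ, true_and]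
      constructor
      · rintro ⟨w0, rfl⟩; exact ⟨w0, rfl⟩
      · rintro ⟨w0, rfl⟩; exact ⟨w0, rfl⟩
    rw [himg, Finset.sum_image (fun a _ b _ h => ebas_inj h), Finset.mul_sum]

lemma bval_zero : bval 0 = 0 := by simp [bval]

lemma sum_had_single {m : ℕ} (w : Coord m) :
    ∑ a ∈ univ.filter (fun a : Fin m → ZMod 2 => a ≠ 0), bval (hadCW a w)
      = ((univ.filter (fun a : Fin m → ZMod 2 => dot2 a w.val = 1)).card : ℝ) := by
  rw [Finset.filter_ne', Finset.sum_erase _ (by simp [hadCW, dot2_zero_left, bval_zero])]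
  simp [bval, hadCW, Finset.sum_boole]
  convert Finset.sum_boole _ _
  exact if_congr Iff.rfl rfl rfl

lemma sum_had_pair {m : ℕ} (w1 w2 : Coord m) :
    ∑ a ∈ univ.filter (fun a : Fin m → ZMod 2 => a ≠ 0),
        bval (hadCW a w1) * bval (hadCW a w2)
      = ((univ.filter (fun a : Fin m → ZMod 2 =>
          dot2 a w1.val = 1 ∧ dot2 a w2.val = 1)).card : ℝ) := by
  rw [Finset.filter_ne',
    Finset.sum_erase _ (by simp [hadCW, dot2_zero_left, bval_zero])]
  simp only [bval_mul, hadCW]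
  simp [Finset.sum_boole]

lemma sum_ebas_single {m : ℕ} (w : Coord m) :
    ∑ w0 : Coord m, bval (ebas w0 w) = 1 := by
  have : ∀ w0 : Coord m, bval (ebas w0 w) = if w = w0 then 1 else 0 := by
    intro w0
    by_cases h : w = w0 <;> simp [ebas, bval, h]
  rw [Finset.sum_congr rfl (fun w0 _ => this w0)]
  simp

lemma sum_ebas_pair {m : ℕ} (w1 w2 : Coord m) (h : w1 ≠ w2) :
    ∑ w0 : Coord m, bval (ebas w0 w1) * bval (ebas w0 w2) = 0 := by
  apply Finset.sum_eq_zero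
  intro w0 _
  rcases eq_or_ne w1 w0 with rfl | hne
  · have : ebas w1 w2 = 0 := by
      simp only [ebas]
      rw [if_neg (fun e => h e.symm)]
    rw [mul_comm, this, bval_zero, zero_mul]
  · have : ebas w0 w1 = 0 := by
      simp only [ebas]
      rw [if_neg hne]
    rw [this, bval_zero, zero_mul]


theorem Dke_covariance (m : ℕ) (hm : 2 < m) (k : ℕ) (hk : k = 2 ^ m - 1)
    (ε α : ℝ) (hε0 : 0 < ε) (hε : ε ≤ 1 / (k : ℝ) ^ 2) (hα : α = ((k : ℝ) - 1) * ε)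
    (D : (Coord m → ZMod 2) → ℝ)
    (hD : ∀ x : Coord m → ZMod 2,
      D x = (if x = (fun _ => 0) then 1 / (1 - α) * (1 / ((k : ℝ) + 1) - α) else 0) +
        (if ∃ a : Fin m → ZMod 2, a ≠ 0 ∧ x = hadCW a then
          1 / (1 - α) * (1 / ((k : ℝ) + 1) - ε) else 0) +
        (if ∃ w0 : Coord m, x = ebas w0 then ε / (1 - α) else 0)) :
    ∀ w1 w2 : Coord m, w1 ≠ w2 →
      (∑ x : Coord m → ZMod 2, D x * (bval (x w1) * bval (x w2))) -
        (∑ x : Coord m → ZMod 2, D x * bval (x w1)) *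
          (∑ x : Coord m → ZMod 2, D x * bval (x w2)) = -ε / (2 * (1 - α)) := by
  intro w1 w2 hw
  obtain ⟨n, rfl⟩ : ∃ n, m = n + 3 := ⟨m - 3, by omega⟩
  -- cardinalities
  have hC1 : (univ.filter (fun a : Fin (n+3) → ZMod 2 => dot2 a w1.val = 1)).card
      = 4 * 2 ^ n := by
    have := two_mul_card_single w1.val w1.prop
    have hpow : (2:ℕ) ^ (n+3) = 8 * 2 ^ n := by ring
    omega
  have hC2 : (univ.filter (fun a : Fin (n+3) → ZMod 2 => dot2 a w2.val = 1)).card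
      = 4 * 2 ^ n := by
    have := two_mul_card_single w2.val w2.prop
    have hpow : (2:ℕ) ^ (n+3) = 8 * 2 ^ n := by ring
    omega
  have hC12 : (univ.filter (fun a : Fin (n+3) → ZMod 2 =>
      dot2 a w1.val = 1 ∧ dot2 a w2.val = 1)).card = 2 * 2 ^ n := by
    have := four_mul_card_pair w1.val w2.val w1.prop w2.prop
      (fun e => hw (Subtype.ext e))
    have hpow : (2:ℕ) ^ (n+3) = 8 * 2 ^ n := by ring
    omega
  -- the three sums
  rw [sum_D_decomp k ε α D hD (fun x => bval (x w1) * bval (x w2)),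
    sum_D_decomp k ε α D hD (fun x => bval (x w1)),
    sum_D_decomp k ε α D hD (fun x => bval (x w2))]
  simp only [bval_zero, mul_zero, zero_mul]
  rw [sum_had_single w1, sum_had_single w2, sum_had_pair w1 w2,
    sum_ebas_single w1, sum_ebas_single w2, sum_ebas_pair w1 w2 hw]
  rw [hC1, hC2, hC12]
  -- numeric part
  have hkR : (k : ℝ) = 8 * 2 ^ n - 1 := by
    subst hk
    push_cast [Nat.cast_sub (Nat.one_le_two_pow)]
    ring
  have hQ : (0:ℝ) < 2 ^ n := by positivity
  have h1Q : (1:ℝ) ≤ 2 ^ n := one_le_pow₀ (by norm_num)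
  have hkR7 : (7:ℝ) ≤ (k:ℝ) := by rw [hkR]; linarith
  have hεk : ε * (k:ℝ)^2 ≤ 1 := (le_div_iff₀ (by positivity)).mp hε
  have h1α : (1:ℝ) - α ≠ 0 := by
    have hfac : (0:ℝ) < (k:ℝ)^2 - (k:ℝ) + 1 := by nlinarith
    have : α < 1 := by
      rw [hα]
      nlinarith [mul_pos hε0 hfac]
    linarith
  have hkne : ((k:ℝ) + 1) ≠ 0 := by linarith
  push_cast
  field_simp
  rw [hα, hkR]
  ring
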